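/- For 0 < α ≤ π/4, define Y = Y₁ ⊗ (|0⟩⟨0| + |1⟩⟨1|) + Y₂ ⊗ |2⟩⟨2| + ((1+cos²α)/cos²α) Y₃ with Y₁ = ((1+cos²α)/cos²α)|0⟩⟨0| + (1+cos²α)|1⟩⟨1|, Y₂ = (2 − sec²α)|0⟩⟨0| + (sec²α − sin²α)|1⟩⟨1| + (1+cos²α) sec²α |2⟩⟨2|, Y₃ = |00⟩⟨22| + |22⟩⟨00|. Then Y − |Φ⟩⟨Φ| ≥ 0, where |Φ⟩ = |00⟩ + |11⟩ + |22⟩. -/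

import Mathlib

open Matrix Kronecker Complex ComplexOrder

noncomputable section

abbrev M3 : Type := Matrix (Fin 3) (Fin 3) ℂ
abbrev M9 : Type := Matrix (Fin 3 × Fin 3) (Fin 3 × Fin 3) ℂ

/-- |i⟩⟨j| on ℂ³ -/
def ket (i j : Fin 3) : M3 := Matrix.single i j 1

def E (α : ℝ) : M3 := (Real.sin α : ℂ) • ket 0 1 + ket 1 2
def D (α : ℝ) : M3 := (Real.cos α : ℂ) • ket 2 1 + ket 1 0

def u (α : ℝ) : Fin 3 × Fin 3 → ℂ := fun p =>
  (((if p = (1,0) then Real.sin α else 0) + (if p = (2,1) then 1 else 0)) /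
    Real.sqrt (1 + Real.sin α ^ 2) : ℝ)

def v (α : ℝ) : Fin 3 × Fin 3 → ℂ := fun p =>
  (((if p = (1,2) then Real.cos α else 0) + (if p = (0,1) then 1 else 0)) /
    Real.sqrt (1 + Real.cos α ^ 2) : ℝ)

/-- Projection onto span{|u_α⟩, |v_α⟩}, the support of the Choi matrix of N_α. -/
def Pproj (α : ℝ) : M9 :=
  vecMulVec (u α) (star (u α)) + vecMulVec (v α) (star (v α))

/-- Partial trace over the first (A) factor. -/
def trA (M : M9) : M3 := fun i j => ∑ k, M (k, i) (k, j)

/-- Partial trace over the second (B) factor. -/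
def trB (M : M9) : M3 := fun i j => ∑ k, M (i, k) (j, k)

def Phi : Fin 3 × Fin 3 → ℂ := fun p => if p.1 = p.2 then 1 else 0

def Y1 (α : ℝ) : M3 :=
  (((1 + Real.cos α ^ 2) / Real.cos α ^ 2 : ℝ) : ℂ) • ket 0 0 +
  ((1 + Real.cos α ^ 2 : ℝ) : ℂ) • ket 1 1

def Y2 (α : ℝ) : M3 :=
  ((2 - 1 / Real.cos α ^ 2 : ℝ) : ℂ) • ket 0 0 +
  ((1 / Real.cos α ^ 2 - Real.sin α ^ 2 : ℝ) : ℂ) • ket 1 1 +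
  (((1 + Real.cos α ^ 2) / Real.cos α ^ 2 : ℝ) : ℂ) • ket 2 2

def Y3 : M9 := ket 0 2 ⊗ₖ ket 0 2 + ket 2 0 ⊗ₖ ket 2 0

def Ymat (α : ℝ) : M9 :=
  Y1 α ⊗ₖ (ket 0 0 + ket 1 1) + Y2 α ⊗ₖ ket 2 2 +
  (((1 + Real.cos α ^ 2) / Real.cos α ^ 2 : ℝ) : ℂ) • Y3

-- Cholesky-style factor
def Bfac (α : ℝ) : Matrix (Fin 5) (Fin 3 × Fin 3) ℂ :=
  Matrix.of fun r p =>
    if r = 0 ∧ p = (0,1) then ((Real.sqrt ((1 + Real.cos α ^ 2) / Real.cos α ^ 2) : ℝ) : ℂ) else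
    if r = 1 ∧ p = (1,0) then ((Real.sqrt (1 + Real.cos α ^ 2) : ℝ) : ℂ) else
    if r = 2 ∧ p = (0,2) then ((Real.sqrt (2 - 1 / Real.cos α ^ 2) : ℝ) : ℂ) else
    if r = 3 ∧ p = (1,2) then ((Real.sqrt (1 / Real.cos α ^ 2 - Real.sin α ^ 2) : ℝ) : ℂ) else
    if r = 4 ∧ p = (0,0) then (-(1 / Real.sqrt (Real.cos α ^ 2) : ℝ) : ℂ) else
    if r = 4 ∧ p = (1,1) then ((Real.sqrt (Real.cos α ^ 2) : ℝ) : ℂ) else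
    if r = 4 ∧ p = (2,2) then (-(1 / Real.sqrt (Real.cos α ^ 2) : ℝ) : ℂ) else 0

set_option maxHeartbeats 4000000 in
theorem lovasz_dual_psd (α : ℝ) (hα : 0 < α) (hα' : α ≤ Real.pi / 4) :
    (Ymat α - vecMulVec Phi (star Phi)).PosSemidef := by
  have hcos : 0 < Real.cos α := by
    apply Real.cos_pos_of_mem_Ioo
    constructor
    · linarith [Real.pi_pos]
    · linarith [Real.pi_pos]
  have hc : 0 < Real.cos α ^ 2 := by positivity
  have hc1 : Real.cos α ^ 2 ≤ 1 := by
    nlinarith [Real.cos_le_one α]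
  have hhalf : (1:ℝ)/2 ≤ Real.cos α ^ 2 := by
    have h1 : Real.cos (Real.pi/4) ≤ Real.cos α := by
      apply Real.cos_le_cos_of_nonneg_of_le_pi (le_of_lt hα) _ hα'
      linarith [Real.pi_pos]
    rw [Real.cos_pi_div_four] at h1
    nlinarith [Real.sq_sqrt (by norm_num : (0:ℝ) ≤ 2), Real.sqrt_nonneg 2]
  have hs : Real.sin α ^ 2 = 1 - Real.cos α ^ 2 := by
    nlinarith [Real.sin_sq_add_cos_sq α]
  have hcc : Complex.cos (α:ℂ) ≠ 0 := by
    rw [← Complex.ofReal_cos]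
    exact_mod_cast hcos.ne'
  have hsC : Complex.sin (α:ℂ) ^ 2 = 1 - Complex.cos (α:ℂ) ^ 2 := by
    linear_combination Complex.sin_sq_add_cos_sq (α:ℂ)
  have key : Ymat α - vecMulVec Phi (star Phi) = (Bfac α)ᴴ * Bfac α := by
    have e1 : Real.sqrt ((1 + Real.cos α ^ 2) / Real.cos α ^ 2) *
        Real.sqrt ((1 + Real.cos α ^ 2) / Real.cos α ^ 2) =
        (1 + Real.cos α ^ 2) / Real.cos α ^ 2 :=
      Real.mul_self_sqrt (by positivity)
    have e2 : Real.sqrt (1 + Real.cos α ^ 2) * Real.sqrt (1 + Real.cos α ^ 2) =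
        1 + Real.cos α ^ 2 := Real.mul_self_sqrt (by positivity)
    have e3 : Real.sqrt (2 - 1 / Real.cos α ^ 2) * Real.sqrt (2 - 1 / Real.cos α ^ 2) =
        2 - 1 / Real.cos α ^ 2 := Real.mul_self_sqrt (by
          rw [sub_nonneg, div_le_iff₀ hc]; linarith)
    have e4 : Real.sqrt (1 / Real.cos α ^ 2 - Real.sin α ^ 2) *
        Real.sqrt (1 / Real.cos α ^ 2 - Real.sin α ^ 2) =
        1 / Real.cos α ^ 2 - Real.sin α ^ 2 := Real.mul_self_sqrt (by
          rw [sub_nonneg, hs, le_div_iff₀ hc]; nlinarith)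
    have e5 : Real.sqrt (Real.cos α ^ 2) * Real.sqrt (Real.cos α ^ 2) = Real.cos α ^ 2 :=
      Real.mul_self_sqrt (le_of_lt hc)
    have hsq : Real.sqrt (Real.cos α ^ 2) ≠ 0 := by
      rw [Real.sqrt_ne_zero']; exact hc
    have g3 : ((Real.sqrt (-1 + Real.cos α ^ 2 * 2) : ℝ) : ℂ) ^ 2 =
        ((-1 + Real.cos α ^ 2 * 2 : ℝ) : ℂ) := by
      rw [← Complex.ofReal_pow, Real.sq_sqrt (by nlinarith)]
    have g4 : ((Real.sqrt (1 - Real.cos α ^ 2 * Real.sin α ^ 2) : ℝ) : ℂ) ^ 2 =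
        ((1 - Real.cos α ^ 2 * Real.sin α ^ 2 : ℝ) : ℂ) := by
      rw [← Complex.ofReal_pow,
        Real.sq_sqrt (by nlinarith [Real.sin_sq_le_one α, sq_nonneg (Real.sin α)])]
    ext ⟨i, j⟩ ⟨k, l⟩
    fin_cases i <;> fin_cases j <;> fin_cases k <;> fin_cases l <;>
      simp (config := { decide := true }) [Ymat, Y1, Y2, Y3, ket, Phi, Bfac,
        Matrix.mul_apply, Fin.sum_univ_five, Matrix.vecMulVec_apply,
        Matrix.single, Matrix.kroneckerMap_apply, Prod.ext_iff,
        ← Complex.ofReal_mul, e1, e2, e3, e4, e5] <;>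
      (try push_cast) <;> (try rw [hsC]) <;> (try field_simp [hcc]) <;> (try ring) <;>
      (try rw [g3]) <;> (try rw [g4]) <;> (try push_cast) <;> (try rw [hsC]) <;> (try ring) <;>
      (rw [← Complex.ofReal_cos]; norm_cast; rw [Real.sq_sqrt (by
        have hci : Real.cos α ^ 2 * (Real.cos α)⁻¹ ^ 2 = 1 := by field_simp
        nlinarith [inv_pos.mpr hcos, pow_pos (inv_pos.mpr hcos) 2])] <;> field_simp <;> push_cast [hs] <;> ring)
  rw [key]
  exact Matrix.posSemidef_conjTranspose_mul_self _
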